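/- For any real y > 0 and positive integers a, b, the coefficient [y^a] of (e^y − 1)^b satisfies [y^a] (e^y − 1)^b ≤ C · (yb)^{-1/2} · (e^y − 1)^b / y^a for an absolute constant C (uniform in a, b, y). -/

import Mathlib

open MeasureTheory Real Complex Finset intervalIntegral Nat

lemma ortho (m : ℤ) (hm : m ≠ 0) :
    ∫ t in (-π)..π, Complex.exp (m * t * Complex.I) = 0 := by
  have hc : (m : ℂ) * Complex.I ≠ 0 := by
    simp [Complex.ext_iff, hm]
  have key := integral_exp_mul_complex (a := -π) (b := π) hc
  have h1 : ∀ t : ℝ, (m : ℂ) * t * Complex.I = (m : ℂ) * Complex.I * t := by intro t; ring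
  simp_rw [h1]
  rw [key]
  have h2 : ((m : ℂ) * Complex.I) * (π : ℂ) = m * (π * Complex.I) := by ring
  have h3 : ((m : ℂ) * Complex.I) * ((-π : ℝ) : ℂ) = ((-m : ℤ) : ℂ) * (π * Complex.I) := by
    push_cast; ring
  rw [h2, h3, Complex.exp_int_mul, Complex.exp_int_mul, Complex.exp_pi_mul_I]
  simp only [zpow_neg]
  have h4 : ((-1:ℂ))^m * ((-1:ℂ))^m = 1 := by rw [← mul_zpow]; norm_num
  rw [inv_eq_of_mul_eq_one_right h4, sub_self, zero_div]

lemma expint (c : ℂ) (a : ℕ) :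
    ∫ t in (-π)..π, Complex.exp (c * Complex.exp (t * Complex.I)) *
        Complex.exp (-(a : ℤ) * t * Complex.I) = 2 * π * c ^ a / (Nat.factorial a : ℂ) := by
  have hpi : (-π : ℝ) ≤ π := by linarith [pi_pos]
  set F : ℕ → ℝ → ℂ := fun n t => (c ^ n / n !) * Complex.exp (((n : ℤ) - a) * t * Complex.I)
    with hF
  have hpt : ∀ t : ℝ, Complex.exp (c * Complex.exp (t * Complex.I)) *
      Complex.exp (-(a : ℤ) * t * Complex.I) = ∑' n, F n t := by
    intro t
    have h1 : Complex.exp (c * Complex.exp (t * Complex.I)) =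
        ∑' n : ℕ, (c * Complex.exp (t * Complex.I)) ^ n / n ! := by
      rw [Complex.exp_eq_exp_ℂ, NormedSpace.exp_eq_tsum_div]
    rw [h1, ← tsum_mul_right]
    refine tsum_congr fun n => ?_
    rw [hF]
    have h2 : (c * Complex.exp (t * Complex.I)) ^ n / n ! * Complex.exp (-(a : ℤ) * t * Complex.I)
        = c ^ n / n ! * (Complex.exp ((n : ℕ) * (t * Complex.I)) *
          Complex.exp (-(a : ℤ) * t * Complex.I)) := by
      rw [mul_pow, ← Complex.exp_nat_mul]; ring
    rw [h2, ← Complex.exp_add]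
    congr 2
    push_cast
    ring
  have hcont : ∀ n, Continuous (F n) := by
    intro n
    fun_prop
  have hnorm : ∀ n (t : ℝ), ‖F n t‖ = ‖c‖ ^ n / n ! := by
    intro n t
    rw [hF]
    simp only [norm_mul, Complex.norm_exp]
    have h3 : ((((n : ℤ) : ℂ) - a) * t * Complex.I).re = 0 := by
      simp [Complex.mul_re, Complex.mul_im]
    rw [h3]
    simp [map_div₀, map_pow, Real.exp_zero]
  have hInt : ∀ n, IntegrableOn (F n) (Set.Ioc (-π) π) := fun n =>
    (hcont n).integrableOn_Ioc
  have hsum : Summable (fun n => ∫ t in Set.Ioc (-π) π, ‖F n t‖) := by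
    apply Summable.congr (f := fun n => (‖c‖ ^ n / n !) * (2 * π))
    · exact (Real.summable_pow_div_factorial ‖c‖).mul_right _
    · intro n
      simp_rw [hnorm n]
      rw [setIntegral_const, measureReal_def, Real.volume_Ioc, smul_eq_mul]
      rw [ENNReal.toReal_ofReal (by linarith [pi_pos])]
      ring
  have key : ∫ t in Set.Ioc (-π) π, (∑' n, F n t) = ∑' n, ∫ t in Set.Ioc (-π) π, F n t :=
    (integral_tsum_of_summable_integral_norm (fun n => hInt n) hsum).symm
  calc ∫ t in (-π)..π, Complex.exp (c * Complex.exp (t * Complex.I)) *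
        Complex.exp (-(a : ℤ) * t * Complex.I)
      = ∫ t in Set.Ioc (-π) π, (∑' n, F n t) := by
        rw [integral_of_le hpi]
        exact setIntegral_congr_fun measurableSet_Ioc fun t _ => hpt t
    _ = ∑' n, ∫ t in Set.Ioc (-π) π, F n t := key
    _ = 2 * π * c ^ a / (Nat.factorial a : ℂ) := by
        rw [tsum_eq_single a ?_]
        · have : ∀ t : ℝ, F a t = c ^ a / a ! := by
            intro t
            rw [hF]
            simp
          simp_rw [this]
          rw [setIntegral_const, measureReal_def, Real.volume_Ioc, sub_neg_eq_add,
            ENNReal.toReal_ofReal (by linarith [pi_pos])]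
          rw [real_smul]
          push_cast
          ring
        · intro n hn
          have hm : ((n : ℤ) - a) ≠ 0 := by
            simpa [sub_eq_zero] using fun h => hn (by exact_mod_cast h)
          have h0 := ortho ((n : ℤ) - a) hm
          rw [← integral_of_le hpi] at *
          rw [hF]
          simp only
          rw [intervalIntegral.integral_const_mul]
          have he : ∀ t : ℝ, ((((n : ℤ) : ℂ)) - (a : ℂ)) * t * Complex.I
              = ((((n : ℤ) - a : ℤ)) : ℂ) * t * Complex.I := by
            intro t; push_cast; ring
          simp_rw [he]
          rw [h0, mul_zero]

lemma coeff_formula (b n : ℕ) :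
    PowerSeries.coeff (R := ℝ) n ((PowerSeries.exp ℝ - 1) ^ b)
      = ∑ j ∈ Finset.range (b + 1), (-1 : ℝ) ^ (j + b) * (b.choose j) * (j : ℝ) ^ n / n ! := by
  rw [sub_pow, map_sum]
  refine Finset.sum_congr rfl fun j hj => ?_
  rw [PowerSeries.exp_pow_eq_rescale_exp]
  simp only [one_pow, mul_one]
  rw [← map_natCast (PowerSeries.C (R := ℝ)) (b.choose j),
    show ((-1 : PowerSeries ℝ)) = PowerSeries.C (R := ℝ) (-1) by simp, ← map_pow,
    PowerSeries.coeff_mul_C, PowerSeries.coeff_C_mul, PowerSeries.coeff_rescale,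
    PowerSeries.coeff_exp]
  have : (algebraMap ℚ ℝ) (1 / n !) = 1 / (n ! : ℝ) := by
    simp [eq_ratCast]
  rw [this]
  ring

lemma main_identity (a b : ℕ) (y : ℝ) :
    ∫ t in (-π)..π, (Complex.exp (y * Complex.exp (t * Complex.I)) - 1) ^ b *
        Complex.exp (-(a : ℤ) * t * Complex.I)
      = 2 * π * ((PowerSeries.coeff (R := ℝ) a ((PowerSeries.exp ℝ - 1) ^ b) : ℝ) : ℂ) * (y : ℂ) ^ a := by
  have hpt : ∀ t : ℝ, (Complex.exp (y * Complex.exp (t * Complex.I)) - 1) ^ b *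
      Complex.exp (-(a : ℤ) * t * Complex.I)
      = ∑ j ∈ Finset.range (b + 1), ((-1 : ℂ) ^ (j + b) * (b.choose j)) *
        (Complex.exp (((j : ℂ) * y) * Complex.exp (t * Complex.I)) *
          Complex.exp (-(a : ℤ) * t * Complex.I)) := by
    intro t
    rw [sub_pow, Finset.sum_mul]
    refine Finset.sum_congr rfl fun j hj => ?_
    rw [← Complex.exp_nat_mul]
    have : (j : ℂ) * ((y : ℂ) * Complex.exp (t * Complex.I))
        = ((j : ℂ) * y) * Complex.exp (t * Complex.I) := by ring
    rw [this]
    ring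
  simp_rw [hpt]
  rw [intervalIntegral.integral_finset_sum]
  · have hterm : ∀ j ∈ Finset.range (b + 1),
        (∫ t in (-π)..π, ((-1 : ℂ) ^ (j + b) * (b.choose j)) *
          (Complex.exp (((j : ℂ) * y) * Complex.exp (t * Complex.I)) *
            Complex.exp (-(a : ℤ) * t * Complex.I)))
        = ((-1 : ℂ) ^ (j + b) * (b.choose j)) * (2 * π * ((j : ℂ) * y) ^ a / (a ! : ℂ)) := by
      intro j _
      rw [intervalIntegral.integral_const_mul, expint ((j : ℂ) * y) a]
    rw [Finset.sum_congr rfl hterm, coeff_formula]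
    push_cast
    rw [Finset.mul_sum, Finset.sum_mul]
    refine Finset.sum_congr rfl fun j hj => ?_
    rw [mul_pow]
    ring
  · intro j hj
    apply Continuous.intervalIntegrable
    fun_prop

lemma sinh_bound (w : ℂ) :
    ‖Complex.exp w - Complex.exp (-w)‖ ≤ Real.exp ‖w‖ - Real.exp (-‖w‖) := by
  have hsumc : ∀ u : ℂ, Summable fun n : ℕ => u ^ n / (n !) := fun u =>
    NormedSpace.expSeries_div_summable u
  have hexpc : ∀ u : ℂ, Complex.exp u = ∑' n : ℕ, u ^ n / (n !) := fun u => by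
    rw [Complex.exp_eq_exp_ℂ, NormedSpace.exp_eq_tsum_div]
  have hsumr : ∀ x : ℝ, Summable fun n : ℕ => x ^ n / (n !) := fun x =>
    NormedSpace.expSeries_div_summable x
  have hexpr : ∀ x : ℝ, Real.exp x = ∑' n : ℕ, x ^ n / (n !) := fun x => by
    rw [Real.exp_eq_exp_ℝ, NormedSpace.exp_eq_tsum_div]
  rw [hexpc, hexpc, ← Summable.tsum_sub (hsumc w) (hsumc (-w)),
    hexpr, hexpr, ← Summable.tsum_sub (hsumr ‖w‖) (hsumr (-‖w‖))]
  have hterm : ∀ n : ℕ, ‖w ^ n / (n !) - (-w) ^ n / (n !)‖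
      = ‖w‖ ^ n / (n !) - (-‖w‖) ^ n / (n !) := by
    intro n
    rcases Nat.even_or_odd n with he | ho
    · rw [he.neg_pow, he.neg_pow]
      simp
    · rw [ho.neg_pow, ho.neg_pow]
      rw [show w ^ n / (n !) - -w ^ n / (n !) = 2 * w ^ n / (n !) by ring,
        show ‖w‖ ^ n / (n !) - -‖w‖ ^ n / (n !) = 2 * ‖w‖ ^ n / (n !) by ring]
      rw [norm_div, norm_mul, norm_pow]
      norm_num
  calc ‖∑' n : ℕ, (w ^ n / (n !) - (-w) ^ n / (n !))‖
      ≤ ∑' n : ℕ, ‖w ^ n / (n !) - (-w) ^ n / (n !)‖ := by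
        apply norm_tsum_le_tsum_norm
        apply Summable.congr (((hsumr ‖w‖).sub (hsumr (-‖w‖))))
        intro n
        rw [hterm n]
    _ = ∑' n : ℕ, (‖w‖ ^ n / (n !) - (-‖w‖) ^ n / (n !)) := by
        exact tsum_congr hterm

lemma factor_bound (y t : ℝ) (hy : 0 ≤ y) :
    ‖Complex.exp (y * Complex.exp (t * Complex.I)) - 1‖
      ≤ (Real.exp y - 1) * Real.exp (-(y * (1 - Real.cos t)) / 2) := by
  set z : ℂ := y * Complex.exp (t * Complex.I) with hz
  have hsplit : Complex.exp z - 1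
      = Complex.exp (z / 2) * (Complex.exp (z / 2) - Complex.exp (-(z / 2))) := by
    rw [mul_sub, ← Complex.exp_add, ← Complex.exp_add]
    norm_num
  have hre : z.re = y * Real.cos t := by
    rw [hz]
    simp [Complex.exp_mul_I, Complex.mul_re, Complex.mul_im, Complex.cos_ofReal_re]
  have hnz : ‖z‖ = y := by
    rw [hz]
    simp [map_mul, Complex.norm_exp, Complex.norm_real,
      _root_.abs_of_nonneg hy, Complex.mul_re]
  rw [hsplit, norm_mul]
  have h1 : ‖Complex.exp (z / 2)‖ = Real.exp (y * Real.cos t / 2) := by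
    rw [Complex.norm_exp]
    congr 1
    rw [Complex.div_re]
    simp [hre]
    ring
  have h2 : ‖Complex.exp (z / 2) - Complex.exp (-(z / 2))‖
      ≤ Real.exp (y / 2) - Real.exp (-(y / 2)) := by
    have := sinh_bound (z / 2)
    have hnz2 : ‖z / 2‖ = y / 2 := by rw [norm_div, hnz]; simp
    rwa [hnz2] at this
  calc ‖Complex.exp (z / 2)‖ * ‖Complex.exp (z / 2) - Complex.exp (-(z / 2))‖
      ≤ Real.exp (y * Real.cos t / 2) * (Real.exp (y / 2) - Real.exp (-(y / 2))) := by
        rw [h1]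
        exact mul_le_mul_of_nonneg_left h2 (Real.exp_pos _).le
    _ = (Real.exp y - 1) * Real.exp (-(y * (1 - Real.cos t)) / 2) := by
        have e1 : y * Real.cos t / 2 + y / 2 = y + -(y * (1 - Real.cos t)) / 2 := by ring
        have e2 : y * Real.cos t / 2 + -(y / 2) = -(y * (1 - Real.cos t)) / 2 := by ring
        rw [mul_sub, sub_mul, one_mul, ← Real.exp_add, ← Real.exp_add, e1, e2, Real.exp_add]

lemma one_sub_cos_bound (t : ℝ) (ht : |t| ≤ π) : 2 * t ^ 2 / π ^ 2 ≤ 1 - Real.cos t := by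
  have hpi := pi_pos
  have habs : Real.cos t = Real.cos |t| := by
    rcases abs_cases t with ⟨h, _⟩ | ⟨h, _⟩
    · rw [h]
    · rw [h, Real.cos_neg]
  rw [habs]
  have h0 : (0 : ℝ) ≤ |t| := abs_nonneg t
  have hhalf : |t| / 2 ≤ π / 2 := by linarith
  have hj : 2 / π * (|t| / 2) ≤ Real.sin (|t| / 2) := Real.mul_le_sin (by positivity) hhalf
  have hsq : (2 / π * (|t| / 2)) ^ 2 ≤ Real.sin (|t| / 2) ^ 2 := by
    apply pow_le_pow_left₀ (by positivity) hj
  have hcos : Real.cos |t| = 1 - 2 * Real.sin (|t| / 2) ^ 2 := by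
    rw [show |t| = 2 * (|t| / 2) by ring, Real.cos_two_mul', Real.cos_sq']
    ring
  have key : (2 / π * (|t| / 2)) ^ 2 = t ^ 2 / π ^ 2 := by
    rw [mul_pow, div_pow, div_pow, _root_.sq_abs]
    field_simp
  rw [key] at hsq
  rw [hcos, show 2 * t ^ 2 / π ^ 2 = 2 * (t ^ 2 / π ^ 2) by ring]
  linarith

/-- There is a universal constant `C` such that for all `y > 0` and positive
integers `a, b`, the coefficient of `y^a` in `(e^y - 1)^b` is at most
`C (yb)^{-1/2} (e^y-1)^b / y^a`. -/
theorem coeff_exp_sub_one_pow_le :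
    ∃ C : ℝ, 0 < C ∧ ∀ (a b : ℕ) (y : ℝ), 1 ≤ a → 1 ≤ b → 0 < y →
      (PowerSeries.coeff (R := ℝ) a) ((PowerSeries.exp ℝ - 1) ^ b) ≤
        C / Real.sqrt (y * b) * ((Real.exp y - 1) ^ b / y ^ a) := by
  refine ⟨1, one_pos, fun a b y ha hb hy => ?_⟩
  set c : ℝ := PowerSeries.coeff (R := ℝ) a ((PowerSeries.exp ℝ - 1) ^ b) with hc
  have hpi := pi_pos
  have hb0 : (0 : ℝ) < b := by exact_mod_cast hb
  have hS : (0 : ℝ) < Real.sqrt (y * b) := Real.sqrt_pos.mpr (by positivity)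
  have hya : (0 : ℝ) < y ^ a := pow_pos hy a
  have hey : (0 : ℝ) ≤ Real.exp y - 1 := by
    have := Real.one_le_exp hy.le
    linarith
  set α : ℝ := b * y / π ^ 2 with hα
  have hα0 : 0 < α := by positivity
  -- Key inequality : c * y ^ a ≤ (exp y - 1)^b / sqrt (y * b)
  have KEY2 : c * y ^ a ≤ (Real.exp y - 1) ^ b / Real.sqrt (y * b) := by
    have h2pi : (0 : ℝ) < 2 * π := by linarith
    refine le_of_mul_le_mul_left ?_ h2pi
    calc 2 * π * (c * y ^ a) ≤ 2 * π * |c| * y ^ a := by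
          nlinarith [mul_le_mul_of_nonneg_right (le_abs_self c) hya.le, hpi]
      _ = ‖(2 * (π : ℂ) * (c : ℂ) * (y : ℂ) ^ a : ℂ)‖ := by
          rw [norm_mul, norm_mul, norm_pow]
          simp [Complex.norm_real, abs_of_pos hpi, abs_of_pos hy]
      _ = ‖∫ t in (-π)..π, (Complex.exp (y * Complex.exp (t * Complex.I)) - 1) ^ b *
            Complex.exp (-(a : ℤ) * t * Complex.I)‖ := by rw [main_identity a b y]
      _ ≤ ∫ t in (-π)..π, ‖(Complex.exp (y * Complex.exp (t * Complex.I)) - 1) ^ b *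
            Complex.exp (-(a : ℤ) * t * Complex.I)‖ := by
          apply intervalIntegral.norm_integral_le_integral_norm
          linarith
      _ ≤ ∫ t in (-π)..π, (Real.exp y - 1) ^ b * Real.exp (-α * t ^ 2) := by
          apply intervalIntegral.integral_mono_on (by linarith)
          · apply Continuous.intervalIntegrable
            fun_prop
          · apply Continuous.intervalIntegrable
            fun_prop
          · intro t ht
            rw [norm_mul, norm_pow]
            have hne : ‖Complex.exp (-(a : ℤ) * t * Complex.I)‖ = 1 := by
              rw [Complex.norm_exp]
              have : ((-(a : ℤ) : ℂ) * t * Complex.I).re = 0 := by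
                simp [Complex.mul_re, Complex.mul_im]
              rw [this, Real.exp_zero]
            rw [hne, mul_one]
            have hfb := factor_bound y t hy.le
            have hp : ‖Complex.exp (y * Complex.exp (t * Complex.I)) - 1‖ ^ b
                ≤ ((Real.exp y - 1) * Real.exp (-(y * (1 - Real.cos t)) / 2)) ^ b :=
              pow_le_pow_left₀ (norm_nonneg _) hfb b
            refine hp.trans ?_
            rw [mul_pow, ← Real.exp_nat_mul]
            apply mul_le_mul_of_nonneg_left _ (pow_nonneg hey b)
            apply Real.exp_le_exp.mpr
            have htc : |t| ≤ π := by
              rcases ht with ⟨h1, h2⟩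
              rw [abs_le]; constructor <;> linarith
            have hco := one_sub_cos_bound t htc
            have : α * t ^ 2 ≤ (b : ℝ) * (y * (1 - Real.cos t)) / 2 := by
              rw [hα]
              have h1 : (b : ℝ) * y / π ^ 2 * t ^ 2
                  = (b : ℝ) * (y * (2 * t ^ 2 / π ^ 2)) / 2 := by
                field_simp
              rw [h1]
              have : y * (2 * t ^ 2 / π ^ 2) ≤ y * (1 - Real.cos t) :=
                mul_le_mul_of_nonneg_left hco hy.le
              nlinarith
            linarith
      _ = (Real.exp y - 1) ^ b * ∫ t in (-π)..π, Real.exp (-α * t ^ 2) := by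
          rw [intervalIntegral.integral_const_mul]
      _ ≤ (Real.exp y - 1) ^ b * Real.sqrt (π / α) := by
          apply mul_le_mul_of_nonneg_left _ (pow_nonneg hey b)
          rw [intervalIntegral.integral_of_le (by linarith)]
          calc ∫ t in Set.Ioc (-π) π, Real.exp (-α * t ^ 2)
              ≤ ∫ t : ℝ, Real.exp (-α * t ^ 2) :=
                setIntegral_le_integral (integrable_exp_neg_mul_sq hα0)
                  (Filter.Eventually.of_forall fun x => (Real.exp_pos _).le)
            _ = Real.sqrt (π / α) := integral_gaussian α
      _ ≤ (Real.exp y - 1) ^ b * (2 * π / Real.sqrt (y * b)) := by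
          apply mul_le_mul_of_nonneg_left _ (pow_nonneg hey b)
          have hπα : π / α = π ^ 3 / (y * b) := by
            rw [hα]
            field_simp
          rw [hπα, Real.sqrt_div (by positivity : (0:ℝ) ≤ π ^ 3)]
          have h2 : Real.sqrt (π ^ 3) ≤ 2 * π := by
            have h1 : π ^ 3 ≤ (2 * π) ^ 2 := by nlinarith [pi_le_four, hpi]
            calc Real.sqrt (π ^ 3) ≤ Real.sqrt ((2 * π) ^ 2) := Real.sqrt_le_sqrt h1
              _ = 2 * π := Real.sqrt_sq (by linarith)
          exact div_le_div_of_nonneg_right h2 hS.le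
      _ = 2 * π * ((Real.exp y - 1) ^ b / Real.sqrt (y * b)) := by ring
  have hrw : (1 : ℝ) / Real.sqrt (y * b) * ((Real.exp y - 1) ^ b / y ^ a)
      = ((Real.exp y - 1) ^ b / Real.sqrt (y * b)) / y ^ a := by ring
  rw [hrw, le_div_iff₀ hya]
  exact KEY2
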